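/- Let 0 < θ ≤ 1/6 and define f_θ(z) = (1−θ) + θz for z ∈ ℂ. Then f_θ(𝔻) ⊆ f_θ(𝔻)², i.e., the image of the open unit disk under f_θ is contained in the set { f_θ(z)² : z ∈ 𝔻 }. Equivalently, the open disk of center 1−θ and radius θ is contained in the set of squares of points of that disk. -/

import Mathlib

theorem sqrt_disk_aux (a r x t : ℝ) (ha5 : 5/6 ≤ a) (ha1 : a < 1) (hr0 : 0 ≤ r)
    (hr1 : r < 1) (hkey : r^2 < 1 - 2*a + 2*a*x)
    (ht0 : 0 ≤ t) (h1 : t*t = (r+x)/2) :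
    (t - a)^2 + (r - x)/2 < (1-a)^2 := by
  have hpos : 0 < r + 2*a - 1 := by linarith
  have hineq : (r + 2*a - 1)^2 < 2*a^2*(r + x) := by
    nlinarith [mul_pos (show (0:ℝ) < 1 - r by linarith) hpos,
      mul_pos (show (0:ℝ) < a by linarith) (show (0:ℝ) < 2*a*x + 1 - 2*a - r^2 by linarith)]
  have hlt : r + 2*a - 1 < 2*a*t := by
    nlinarith [hineq, h1, hpos, mul_nonneg (show (0:ℝ) ≤ 2*a by linarith) ht0]
  nlinarith [hlt, h1]

theorem stmt_4 (θ : ℝ) (hθ : θ ∈ Set.Ioc 0 (1 / 6)) :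
    (fun z : ℂ => (1 - (θ : ℂ)) + (θ : ℂ) * z) '' Metric.ball (0 : ℂ) 1 ⊆
      {w : ℂ | ∃ z ∈ Metric.ball (0 : ℂ) 1, ((1 - (θ : ℂ)) + (θ : ℂ) * z) ^ 2 = w} := by
  obtain ⟨hθ0, hθ6⟩ := hθ
  rintro _ ⟨z, hz, rfl⟩
  simp only [Metric.mem_ball, dist_zero_right] at hz
  set v : ℂ := (1 - (θ:ℂ)) + θ * z with hv
  set a : ℝ := 1 - θ with ha
  have ha5 : (5:ℝ)/6 ≤ a := by rw [ha]; linarith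
  have ha1 : a < 1 := by rw [ha]; linarith
  have hdist : ‖v - (a:ℝ)‖ < 1 - a := by
    have h : v - ((a:ℝ):ℂ) = (θ:ℂ) * z := by rw [hv, ha]; push_cast; ring
    rw [h, norm_mul, Complex.norm_real, Real.norm_eq_abs, abs_of_pos hθ0]
    have : θ * ‖z‖ < θ * 1 := mul_lt_mul_of_pos_left hz hθ0
    simpa [ha] using this
  clear_value v
  set x : ℝ := v.re with hx
  set y : ℝ := v.im with hy
  set r : ℝ := ‖v‖ with hr
  have hr0 : 0 ≤ r := norm_nonneg v
  have hr1 : r < 1 := by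
    calc r = ‖(v - (a:ℝ)) + (a:ℝ)‖ := by rw [hr]; ring_nf
    _ ≤ ‖v - (a:ℝ)‖ + ‖((a:ℝ):ℂ)‖ := norm_add_le _ _
    _ < (1 - a) + a := by
        have h2 : ‖((a:ℝ):ℂ)‖ = a := by
          rw [Complex.norm_real, Real.norm_eq_abs, abs_of_pos]; linarith
        rw [h2]; linarith
    _ = 1 := by ring
  have hr2 : r^2 = x^2 + y^2 := by
    rw [hr, Complex.sq_norm, Complex.normSq_apply, ← hx, ← hy]; ring
  clear_value a
  have hq : (x - a)^2 + y^2 < (1-a)^2 := by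
    have h1 : ‖v - (a:ℝ)‖ ^ 2 = (x - a)^2 + y^2 := by
      rw [Complex.sq_norm, Complex.normSq_apply, Complex.sub_re, Complex.sub_im,
        Complex.ofReal_re, Complex.ofReal_im, ← hx, ← hy]
      ring
    nlinarith [hdist, norm_nonneg (v - ((a:ℝ):ℂ))]
  have hxr : |x| ≤ r := Complex.abs_re_le_norm v
  clear_value x y r
  have hxr1 : -r ≤ x := (abs_le.mp hxr).1
  have hxr2 : x ≤ r := (abs_le.mp hxr).2
  have hkey : r^2 < 1 - 2*a + 2*a*x := by nlinarith [hq, hr2]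
  set σ : ℝ := if 0 ≤ y then (1:ℝ) else -1 with hσ
  have hσ2 : σ * σ = 1 := by rw [hσ]; split <;> norm_num
  have hσy : σ * |y| = y := by
    rw [hσ]; split
    · rw [abs_of_nonneg ‹_›]; ring
    · rw [abs_of_neg (lt_of_not_ge ‹¬ 0 ≤ y›)]; ring
  have hA : (0:ℝ) ≤ (r + x)/2 := by linarith
  have hB : (0:ℝ) ≤ (r - x)/2 := by linarith
  set t : ℝ := Real.sqrt ((r + x)/2) with htdef
  set b : ℝ := Real.sqrt ((r - x)/2) with hbdef
  have ht0 : 0 ≤ t := Real.sqrt_nonneg _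
  have h1 : t * t = (r + x)/2 := Real.mul_self_sqrt hA
  have h2 : b * b = (r - x)/2 := Real.mul_self_sqrt hB
  have h3 : t * b = |y| / 2 := by
    rw [htdef, hbdef, ← Real.sqrt_mul hA]
    have he : (r + x)/2 * ((r - x)/2) = (|y|/2)^2 := by
      rw [div_pow, sq_abs]; nlinarith [hr2]
    rw [he]
    exact Real.sqrt_sq (by positivity)
  set s : ℂ := ⟨t, σ * b⟩ with hs
  have hre : s.re = t := rfl
  have him : s.im = σ * b := rfl
  clear_value σ t b
  have hsq : s^2 = v := by
    apply Complex.ext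
    · rw [pow_two, Complex.mul_re, hre, him, ← hx]
      linear_combination h1 - (σ*σ)*h2 - ((r-x)/2)*hσ2
    · rw [pow_two, Complex.mul_im, hre, him, ← hy]
      linear_combination (2*σ)*h3 + hσy
  have haux := sqrt_disk_aux a r x t ha5 ha1 hr0 hr1 hkey ht0 h1
  have hsdist : ‖s - (a:ℝ)‖ < 1 - a := by
    have hd1 : ‖s - (a:ℝ)‖ ^ 2 = (t - a)^2 + (σ * b)^2 := by
      rw [Complex.sq_norm, Complex.normSq_apply, Complex.sub_re, Complex.sub_im,
        Complex.ofReal_re, Complex.ofReal_im, hre, him]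
      ring
    have hd2 : (σ * b)^2 = (r - x)/2 := by
      rw [mul_pow, show σ^2 = σ*σ from sq σ, hσ2, show b^2 = b*b from sq b, h2, one_mul]
    have hd3 : ‖s - (a:ℝ)‖ ^ 2 < (1 - a)^2 := by
      rw [hd1, hd2]; exact haux
    exact lt_of_pow_lt_pow_left₀ 2 (by linarith) hd3
  refine ⟨(s - (1 - (θ:ℂ)))/θ, ?_, ?_⟩
  · simp only [Metric.mem_ball, dist_zero_right]
    rw [norm_div]
    rw [div_lt_one (by simpa [Complex.norm_real, abs_of_pos hθ0] using hθ0)]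
    have hh : s - (1 - (θ:ℂ)) = s - ((a:ℝ):ℂ) := by rw [ha]; push_cast; ring
    rw [hh]
    simpa [Complex.norm_real, abs_of_pos hθ0, ha] using hsdist
  · have hθne : (θ:ℂ) ≠ 0 := by exact_mod_cast hθ0.ne'
    have hfin : (1 - (θ:ℂ)) + (θ:ℂ) * ((s - (1 - (θ:ℂ)))/θ) = s := by field_simp; ring
    rw [hfin, hsq]; exact hv
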